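/- Let A = {0,1}, k = 2k'+1 odd, n ≥ k+1, n0 = n−k+1, and J = {n0, n0+2, …, n−2, n}. Let π be the cyclic permutation of the 8 pairs (0,00), (1,01), (2,11), (3,10), (4,10), (5,11), (6,01), (7,00) sending each listed pair to the next one and (7,00) back to (0,00). For every i ∈ [1, 2^n−1] and every j ∈ J with j ≠ n0, writing r' = μ(i,j) mod 2^{j−2}: if r' ≠ 0 then (Q^{[j]}_{[i]}, C^{[j]}_{[i]}) = (Q^{[j]}_{[i−1]}, θ(C^{[j]}_{[i−1]})), and if r' = 0 then (Q^{[j]}_{[i]}, C^{[j]}_{[i]}) = π(Q^{[j]}_{[i−2^{j−2}]}, C^{[j]}_{[i−2^{j−2}]}). -/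

import Mathlib

/-- Hamming distance between two words (lists) of the same length:
the number of positions in which they differ. -/
def hammingL {α : Type*} [DecidableEq α] (w w' : List α) : ℕ :=
  ((w.zip w').filter fun q => decide (q.1 ≠ q.2)).length

/-- `w` (restricted to indices `< N`) is a `σ_k`-Gray cycle over `X`:
its terms are pairwise distinct and enumerate `X` (a bijection from `[0, N-1]` onto `X`),
two consecutive terms have the same length and Hamming distance exactly `k`, and so do
the first and the last term. -/
def IsGrayCycleOn {α : Type*} [DecidableEq α] (k N : ℕ) (w : ℕ → List α)
    (X : Set (List α)) : Prop :=
  Set.BijOn w (Set.Iio N) X ∧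
  (∀ i, 1 ≤ i → i < N →
    (w (i - 1)).length = (w i).length ∧ hammingL (w (i - 1)) (w i) = k) ∧
  (0 < N → (w (N - 1)).length = (w 0).length ∧ hammingL (w (N - 1)) (w 0) = k)

/-- The bit complement `θ : 0 ↔ 1` on the binary alphabet `{0,1}`. -/
def cpl (x : Fin 2) : Fin 2 := x + 1

/-- The bit complement extended letterwise to binary words. -/
def cplW (w : List (Fin 2)) : List (Fin 2) := w.map cpl

/-- The reflected binary Gray code `g^{m,1}` over words of length `m`:
`g^{0,1} = (ε)` and `g^{m+1,1} = (0·g^{m,1}, 1·(g^{m,1})^R)`. -/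
def binGray : ℕ → List (List (Fin 2))
  | 0 => [[]]
  | m + 1 =>
      (binGray m).map (fun w => 0 :: w) ++ (binGray m).reverse.map (fun w => 1 :: w)

/-- The sequence `γ^{n0,1}`: `γ^{n0,1}_{[0]} = g^{n0,1}_{[0]}` and
`γ^{n0,1}_{[i]} = g^{n0,1}_{[2^{n0} - i]}` for `1 ≤ i ≤ 2^{n0} - 1`. -/
def gamma1 (n0 i : ℕ) : List (Fin 2) :=
  if i = 0 then (binGray n0).getD 0 [] else (binGray n0).getD (2 ^ n0 - i) []

/-- The sequence `ρ^{n0,1}`: `ρ^{n0,1}_{[0]} = g^{n0,1}_{[2^{n0}-1]}` and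
`ρ^{n0,1}_{[i]} = g^{n0,1}_{[i-1]}` for `1 ≤ i ≤ 2^{n0} - 1`. -/
def rho1 (n0 i : ℕ) : List (Fin 2) :=
  if i = 0 then (binGray n0).getD (2 ^ n0 - 1) [] else (binGray n0).getD (i - 1) []

/-- `grSeq n0 true t i` (resp. `grSeq n0 false t i`) is the term of index `i` of the
sequence `γ^{n0+2t, 2t+1}` (resp. `ρ^{n0+2t, 2t+1}`), built inductively: the base cases
are `γ^{n0,1}` and `ρ^{n0,1}`, and, writing `i = q·2^m + r` with `m = n0 + 2t` and
`r < 2^m`, `γ^{m+2, (2t+1)+2}_{[i]}` is `θ^r(00)·γ^{m,2t+1}_{[r]}`, `θ^r(01)·ρ^{m,2t+1}_{[r]}`,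
`θ^r(11)·γ^{m,2t+1}_{[r]}`, `θ^r(10)·ρ^{m,2t+1}_{[r]}` according to `q = 0, 1, 2, 3`, and
`ρ^{m+2, (2t+1)+2}_{[i]}` is `θ^r(10)·γ^{m,2t+1}_{[r]}`, `θ^r(11)·ρ^{m,2t+1}_{[r]}`,
`θ^r(01)·γ^{m,2t+1}_{[r]}`, `θ^r(00)·ρ^{m,2t+1}_{[r]}` according to `q = 0, 1, 2, 3`. -/
def grSeq (n0 : ℕ) : Bool → ℕ → ℕ → List (Fin 2)
  | b, 0, i => if b then gamma1 n0 i else rho1 n0 i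
  | b, t + 1, i =>
      cplW^[i % 2 ^ (n0 + 2 * t)]
        (if b then
          (if i / 2 ^ (n0 + 2 * t) = 0 then [0, 0]
           else if i / 2 ^ (n0 + 2 * t) = 1 then [0, 1]
           else if i / 2 ^ (n0 + 2 * t) = 2 then [1, 1] else [1, 0])
         else
          (if i / 2 ^ (n0 + 2 * t) = 0 then [1, 0]
           else if i / 2 ^ (n0 + 2 * t) = 1 then [1, 1]
           else if i / 2 ^ (n0 + 2 * t) = 2 then [0, 1] else [0, 0])) ++
        grSeq n0 (i / 2 ^ (n0 + 2 * t) % 2 == 0) t (i % 2 ^ (n0 + 2 * t))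

/-- For odd `k` and `n ≥ k + 1`, `gammaNK n k i` is the term `γ^{n,k}_{[i]}`
(here `n0 = n - k + 1` and `k = 2·(k/2) + 1`). -/
def gammaNK (n k i : ℕ) : List (Fin 2) := grSeq (n + 1 - k) true (k / 2) i

/-- For odd `k` and `n ≥ k + 1`, `rhoNK n k i` is the term `ρ^{n,k}_{[i]}`. -/
def rhoNK (n k i : ℕ) : List (Fin 2) := grSeq (n + 1 - k) false (k / 2) i

/-- The cyclic permutation `π` of the 8 pairs
`(0,00), (1,01), (2,11), (3,10), (4,10), (5,11), (6,01), (7,00)`,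
sending each listed pair to the next one and the last back to the first. -/
def piCyc (x : ℕ × List (Fin 2)) : ℕ × List (Fin 2) :=
  if x = (0, [0, 0]) then (1, [0, 1])
  else if x = (1, [0, 1]) then (2, [1, 1])
  else if x = (2, [1, 1]) then (3, [1, 0])
  else if x = (3, [1, 0]) then (4, [1, 0])
  else if x = (4, [1, 0]) then (5, [1, 1])
  else if x = (5, [1, 1]) then (6, [0, 1])
  else if x = (6, [0, 1]) then (7, [0, 0])
  else if x = (7, [0, 0]) then (0, [0, 0])
  else x

def tbl : ℕ → List (Fin 2)
  | 0 => [0, 0]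
  | 1 => [0, 1]
  | 2 => [1, 1]
  | 3 => [1, 0]
  | 4 => [1, 0]
  | 5 => [1, 1]
  | 6 => [0, 1]
  | _ => [0, 0]

lemma cplW_cplW (l : List (Fin 2)) : cplW (cplW l) = l := by
  have h : ∀ x, cpl (cpl x) = x := by decide
  simp only [cplW, List.map_map]
  calc List.map (cpl ∘ cpl) l = List.map id l := by
        apply List.map_congr_left; intro x _; simp [Function.comp, h]
    _ = l := List.map_id l

lemma cplW_iter_mod (r : ℕ) (l : List (Fin 2)) : cplW^[r] l = cplW^[r % 2] l := by
  induction r using Nat.strong_induction_on with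
  | _ r ih =>
    match r with
    | 0 => rfl
    | 1 => rfl
    | r + 2 =>
      have : cplW^[r + 2] l = cplW^[r] l := by
        rw [Function.iterate_succ_apply, Function.iterate_succ_apply, cplW_cplW]
      rw [this, ih r (by omega), Nat.add_mod_right]

lemma cplW_iter_length (r : ℕ) (l : List (Fin 2)) : (cplW^[r] l).length = l.length := by
  induction r with
  | zero => rfl
  | succ r ih => rw [Function.iterate_succ_apply', cplW, List.length_map, ih]

/-- The key structural lemma: the two-letter factor of `grSeq n0 b t i` at level `s`. -/
lemma grSeq_factor (n0 : ℕ) : ∀ t s i : ℕ, ∀ b : Bool, 1 ≤ s → s ≤ t →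
    i < 2 ^ (n0 + 2 * t) →
    ((grSeq n0 b t i).drop (2 * (t - s))).take 2 =
      cplW^[i % 2 ^ (n0 + 2 * s - 2) % 2]
        (tbl ((i + if b then 0 else 2 ^ (n0 + 2 * t)) / 2 ^ (n0 + 2 * s - 2) % 8)) := by
  intro t
  induction t with
  | zero => intro s i b hs hst _; omega
  | succ u ih =>
    intro s i b hs hst hi
    have hm : (0:ℕ) < 2 ^ (n0 + 2 * u) := Nat.pow_pos (by norm_num)
    have hpow : (2:ℕ) ^ (n0 + 2 * (u + 1)) = 2 ^ (n0 + 2 * u) * 4 := by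
      rw [show n0 + 2 * (u + 1) = n0 + 2 * u + 2 by omega, pow_succ, pow_succ]; ring
    simp only [grSeq]
    have hlen : (cplW^[i % 2 ^ (n0 + 2 * u)]
        (if b = true then
          (if i / 2 ^ (n0 + 2 * u) = 0 then ([0, 0] : List (Fin 2))
           else if i / 2 ^ (n0 + 2 * u) = 1 then [0, 1]
           else if i / 2 ^ (n0 + 2 * u) = 2 then [1, 1] else [1, 0])
         else
          (if i / 2 ^ (n0 + 2 * u) = 0 then [1, 0]
           else if i / 2 ^ (n0 + 2 * u) = 1 then [1, 1]
           else if i / 2 ^ (n0 + 2 * u) = 2 then [0, 1] else [0, 0]))).length = 2 := by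
      rw [cplW_iter_length]; split_ifs <;> rfl
    by_cases hsu : s = u + 1
    · subst hsu
      rw [show 2 * (u + 1 - (u + 1)) = 0 by omega, List.drop_zero,
        List.take_left' hlen, cplW_iter_mod,
        show n0 + 2 * (u + 1) - 2 = n0 + 2 * u by omega]
      congr 1
      have hq4 : i / 2 ^ (n0 + 2 * u) < 4 :=
        Nat.div_lt_of_lt_mul (by rw [← hpow]; exact hi)
      cases b
      · -- rho table
        simp only [Bool.false_eq_true, if_false, hpow]
        rw [Nat.add_mul_div_left _ _ hm]
        set q := i / 2 ^ (n0 + 2 * u) with hqd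
        interval_cases q <;> rfl
      · simp only [if_true, add_zero]
        set q := i / 2 ^ (n0 + 2 * u) with hqd
        interval_cases q <;> rfl
    · have hsu' : s ≤ u := by omega
      have hdrop : ∀ (A B : List (Fin 2)) (d : ℕ), A.length = 2 →
          (A ++ B).drop (2 + d) = B.drop d := by
        intro A B d h
        obtain ⟨a, b2, rfl⟩ := List.length_eq_two.mp h
        rw [show 2 + d = d + 1 + 1 by omega]; rfl
      rw [show 2 * (u + 1 - s) = (2 : ℕ) + 2 * (u - s) by omega,
        hdrop _ _ _ hlen,
        ih s (i % 2 ^ (n0 + 2 * u)) _ hs hsu' (Nat.mod_lt _ hm),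
        Nat.mod_mod_of_dvd i (pow_dvd_pow 2 (show n0 + 2 * s - 2 ≤ n0 + 2 * u by omega))]
      congr 2
      -- numerator identity
      have f1 : i % 2 ^ (n0 + 2 * u + 1) =
          2 ^ (n0 + 2 * u) * (i / 2 ^ (n0 + 2 * u) % 2) + i % 2 ^ (n0 + 2 * u) := by
        have h := Nat.div_add_mod (i % 2 ^ (n0 + 2 * u + 1)) (2 ^ (n0 + 2 * u))
        have ha : i % 2 ^ (n0 + 2 * u + 1) / 2 ^ (n0 + 2 * u) = i / 2 ^ (n0 + 2 * u) % 2 := by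
          rw [pow_succ]; exact Nat.mod_mul_right_div_self ..
        have hb : i % 2 ^ (n0 + 2 * u + 1) % 2 ^ (n0 + 2 * u) = i % 2 ^ (n0 + 2 * u) :=
          Nat.mod_mod_of_dvd i (pow_dvd_pow 2 (by omega))
        rw [ha, hb] at h; exact h.symm
      have key : i % 2 ^ (n0 + 2 * u) +
          (if (i / 2 ^ (n0 + 2 * u) % 2 == 0) = true then 0 else 2 ^ (n0 + 2 * u)) =
          i % 2 ^ (n0 + 2 * u + 1) := by
        rcases Nat.mod_two_eq_zero_or_one (i / 2 ^ (n0 + 2 * u)) with h2 | h2 <;>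
          rw [h2] at f1 ⊢ <;> simp at f1 ⊢ <;> omega
      rw [key]
      have lhs_eq : i % 2 ^ (n0 + 2 * u + 1) / 2 ^ (n0 + 2 * s - 2) % 8 =
          i / 2 ^ (n0 + 2 * s - 2) % 8 := by
        rw [show (2:ℕ) ^ (n0 + 2 * u + 1) =
            2 ^ (n0 + 2 * s - 2) * 2 ^ (n0 + 2 * u + 1 - (n0 + 2 * s - 2)) by
          rw [← pow_add]; congr 1; omega,
          Nat.mod_mul_right_div_self]
        exact Nat.mod_mod_of_dvd _ (show (8:ℕ) ∣ _ from by
          rw [show (8:ℕ) = 2 ^ 3 from rfl]; exact pow_dvd_pow 2 (by omega))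
      rw [lhs_eq]
      cases b
      · simp only [Bool.false_eq_true, if_false]
        rw [show (2:ℕ) ^ (n0 + 2 * (u + 1)) =
            2 ^ (n0 + 2 * s - 2) * (2 ^ (n0 + 2 * (u + 1) - (n0 + 2 * s - 2) - 3) * 8) by
          rw [show (8:ℕ) = 2 ^ 3 from rfl, ← pow_add, ← pow_add]; congr 1; omega,
          Nat.add_mul_div_left _ _ (Nat.pow_pos (by norm_num)),
          Nat.add_mul_mod_self_right]
      · simp

/-- Let `k` be odd, `n ≥ k + 1`, `n0 = n - k + 1`, and `J = {n0, n0+2, …, n-2, n}`.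
For `j ∈ J` with `j ≠ n0`, writing `μ(i,j) = i mod 2^{j+1}`,
`Q^{[j]}_{[i]} = ⌊μ(i,j)/2^{j-2}⌋`, `C^{[j]}_{[i]}` the two-letter factor of
`γ^{n,k}_{[i]}` in positions `j, j-1` from the right, and `r' = μ(i,j) mod 2^{j-2}`:
if `r' ≠ 0` then `(Q^{[j]}_{[i]}, C^{[j]}_{[i]}) = (Q^{[j]}_{[i-1]}, θ(C^{[j]}_{[i-1]}))`,
and if `r' = 0` then
`(Q^{[j]}_{[i]}, C^{[j]}_{[i]}) = π(Q^{[j]}_{[i-2^{j-2}]}, C^{[j]}_{[i-2^{j-2}]})`. -/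
theorem statement11 (n k : ℕ) (hk1 : 1 ≤ k) (hk : Odd k) (hn : k + 1 ≤ n) :
    ∀ j, n - k + 1 < j → j ≤ n → (j - (n - k + 1)) % 2 = 0 →
    ∀ i, 1 ≤ i → i < 2 ^ n →
      (i % 2 ^ (j + 1) % 2 ^ (j - 2) ≠ 0 →
        (i % 2 ^ (j + 1) / 2 ^ (j - 2),
            ((gammaNK n k i).drop (n - j)).take 2) =
          ((i - 1) % 2 ^ (j + 1) / 2 ^ (j - 2),
            cplW (((gammaNK n k (i - 1)).drop (n - j)).take 2))) ∧
      (i % 2 ^ (j + 1) % 2 ^ (j - 2) = 0 →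
        (i % 2 ^ (j + 1) / 2 ^ (j - 2),
            ((gammaNK n k i).drop (n - j)).take 2) =
          piCyc ((i - 2 ^ (j - 2)) % 2 ^ (j + 1) / 2 ^ (j - 2),
            ((gammaNK n k (i - 2 ^ (j - 2))).drop (n - j)).take 2)) := by
  intro j hj1 hj2 hpar i hi1 hi2
  have hk2 : k % 2 = 1 := Nat.odd_iff.mp hk
  obtain ⟨s, hs⟩ : ∃ s, j = (n - k + 1) + 2 * s := ⟨(j - (n - k + 1)) / 2, by omega⟩
  have hs1 : 1 ≤ s := by omega
  have hst : s ≤ k / 2 := by omega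
  have hnj : n - j = 2 * (k / 2 - s) := by omega
  have hn0 : n + 1 - k = n - k + 1 := by omega
  have hnn : (n - k + 1) + 2 * (k / 2) = n := by omega
  have hj3 : 3 ≤ j := by omega
  have hD : (0:ℕ) < 2 ^ (j - 2) := Nat.pow_pos (by norm_num)
  have hM : (2:ℕ) ^ (j + 1) = 2 ^ (j - 2) * 8 := by
    rw [show (8:ℕ) = 2 ^ 3 from rfl, ← pow_add]; congr 1; omega
  have key : ∀ i', i' < 2 ^ n → ((gammaNK n k i').drop (n - j)).take 2 =
      cplW^[i' % 2 ^ (j - 2) % 2] (tbl (i' / 2 ^ (j - 2) % 8)) := by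
    intro i' hi'
    have h := grSeq_factor (n - k + 1) (k / 2) s i' true hs1 hst (by rw [hnn]; exact hi')
    simp only [if_true, add_zero, show (n - k + 1) + 2 * s - 2 = j - 2 by omega,
      ← hnj] at h
    unfold gammaNK
    rw [hn0]
    exact h
  have hQ : ∀ i', i' % 2 ^ (j + 1) / 2 ^ (j - 2) = i' / 2 ^ (j - 2) % 8 := fun i' => by
    rw [hM]; exact Nat.mod_mul_right_div_self ..
  have hr : i % 2 ^ (j + 1) % 2 ^ (j - 2) = i % 2 ^ (j - 2) :=
    Nat.mod_mod_of_dvd i ⟨8, hM⟩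
  constructor
  · intro hne
    rw [hr] at hne
    have hmlt := Nat.mod_lt i hD
    have hdm := Nat.div_add_mod i (2 ^ (j - 2))
    have h1 : i - 1 = 2 ^ (j - 2) * (i / 2 ^ (j - 2)) + (i % 2 ^ (j - 2) - 1) := by omega
    have hq1 : (i - 1) / 2 ^ (j - 2) = i / 2 ^ (j - 2) := by
      rw [h1, Nat.mul_add_div hD,
        Nat.div_eq_of_lt (show i % 2 ^ (j - 2) - 1 < 2 ^ (j - 2) by omega), add_zero]
    have hq2 : (i - 1) % 2 ^ (j - 2) = i % 2 ^ (j - 2) - 1 := by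
      rw [h1, Nat.mul_add_mod, Nat.mod_eq_of_lt (show i % 2 ^ (j - 2) - 1 < 2 ^ (j - 2) by omega)]
    rw [key i hi2, key (i - 1) (by omega), hQ, hQ, hq1, hq2]
    refine Prod.ext rfl ?_
    rcases Nat.mod_two_eq_zero_or_one (i % 2 ^ (j - 2)) with h2 | h2
    · rw [h2, show (i % 2 ^ (j - 2) - 1) % 2 = 1 by omega]
      simp [cplW_cplW]
    · rw [h2, show (i % 2 ^ (j - 2) - 1) % 2 = 0 by omega]
      simp
  · intro h0
    rw [hr] at h0
    have hiD : 2 ^ (j - 2) ≤ i := by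
      by_contra hc; push_neg at hc
      rw [Nat.mod_eq_of_lt hc] at h0; omega
    have hdm := Nat.div_add_mod i (2 ^ (j - 2))
    have hq1 : 1 ≤ i / 2 ^ (j - 2) := (Nat.one_le_div_iff hD).mpr hiD
    have h1 : i - 2 ^ (j - 2) = 2 ^ (j - 2) * (i / 2 ^ (j - 2) - 1) + 0 := by
      rw [Nat.mul_sub, add_zero, mul_one]; omega
    have hq2 : (i - 2 ^ (j - 2)) / 2 ^ (j - 2) = i / 2 ^ (j - 2) - 1 := by
      rw [h1, Nat.mul_add_div hD, Nat.div_eq_of_lt hD, add_zero]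
    have hq3 : (i - 2 ^ (j - 2)) % 2 ^ (j - 2) = 0 := by
      rw [h1, Nat.mul_add_mod, Nat.zero_mod]
    rw [key i hi2, key (i - 2 ^ (j - 2)) (by omega), hQ, hQ, h0, hq2, hq3]
    simp only [Nat.zero_mod, Function.iterate_zero, id_eq]
    have hiq : i / 2 ^ (j - 2) % 8 = ((i / 2 ^ (j - 2) - 1) % 8 + 1) % 8 := by omega
    rw [hiq]
    set q : ℕ := (i / 2 ^ (j - 2) - 1) % 8 with hqd
    have hq8 : q < 8 := Nat.mod_lt _ (by norm_num)
    interval_cases q <;> rfl
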